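/- Let n be a positive integer, ε ≠ 0, and δ ∈ ℝ. Suppose u : ℝ × ℝ → ℝ is C³ and satisfies u_t + uⁿ u_x + ε e^t u_{xxx} = 0 everywhere. Then the function v(t,x) = e^δ u( t − 3nδ, e^(−nδ) x ) also satisfies v_t + vⁿ v_x + ε e^t v_{xxx} = 0 everywhere. -/

import Mathlib

/-- Partial derivative in `t` of `u = u(t,x)`. -/
noncomputable def pt (u : ℝ → ℝ → ℝ) (t x : ℝ) : ℝ := deriv (fun s => u s x) t
/-- Partial derivative in `x` of `u = u(t,x)`. -/
noncomputable def px (u : ℝ → ℝ → ℝ) (t x : ℝ) : ℝ := deriv (fun y => u t y) x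
/-- Third partial derivative in `x` of `u = u(t,x)`. -/
noncomputable def pxxx (u : ℝ → ℝ → ℝ) (t x : ℝ) : ℝ := iteratedDeriv 3 (fun y => u t y) x
/-- Case 2 of Table 1: the one-parameter group generated by `3n∂_t + nx∂_x + u∂_u`
maps solutions of `u_t + uⁿ u_x + ε e^t u_{xxx} = 0` to solutions. -/
theorem stmt_5 (n : ℕ) (hn : 0 < n) (ε : ℝ) (hε : ε ≠ 0) (δ : ℝ)
    (u : ℝ → ℝ → ℝ) (hu : ContDiff ℝ 3 fun p : ℝ × ℝ => u p.1 p.2)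
    (hpde : ∀ t x : ℝ,
      pt u t x + (u t x) ^ n * px u t x + ε * Real.exp t * pxxx u t x = 0)
    (v : ℝ → ℝ → ℝ)
    (hv : ∀ t x, v t x = Real.exp δ * u (t - 3 * (n:ℝ) * δ) (Real.exp (-(n:ℝ) * δ) * x)) :
    ∀ t x : ℝ,
      pt v t x + (v t x) ^ n * px v t x + ε * Real.exp t * pxxx v t x = 0 := by
  intro t x
  set A := Real.exp δ with hA
  set c := Real.exp (-(n:ℝ) * δ) with hc
  set t' := t - 3 * (n:ℝ) * δ with ht'
  set x' := c * x with hx'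
  -- the x-slice is C³
  have hx3 : ContDiff ℝ 3 (fun y => u t' y) :=
    hu.comp (contDiff_const.prodMk contDiff_id)
  have hg : ContDiff ℝ 3 (fun y => u t' (c * y)) :=
    hx3.comp (contDiff_const.mul contDiff_id)
  -- scaling lemma for iterated derivatives
  have hscale1 : deriv (fun y => u t' (c * y)) = fun y => c * deriv (fun z => u t' z) (c * y) := by
    have hd := iteratedDeriv_comp_const_mul (n := 1) (f := fun z => u t' z)
      (hx3.of_le (by norm_num)) c
    simpa [iteratedDeriv_one] using hd
  have hscale3 : iteratedDeriv 3 (fun y => u t' (c * y)) =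
      fun y => c ^ 3 * iteratedDeriv 3 (fun z => u t' z) (c * y) :=
    iteratedDeriv_comp_const_mul hx3 c
  -- time derivative
  have h1 : pt v t x = A * pt u t' x' := by
    unfold pt
    have hvs : (fun s => v s x) = fun s => A * u (s - 3 * (n:ℝ) * δ) x' :=
      funext fun s => hv s x
    rw [hvs, deriv_const_mul_field]
    exact congrArg (fun z => A * z)
      (deriv_comp_sub_const (f := fun s => u s x') (a := 3 * (n:ℝ) * δ) (x := t))
  -- first x-derivative
  have h2 : px v t x = A * c * px u t' x' := by
    unfold px
    have hvs : (fun y => v t y) = fun y => A * u t' (c * y) :=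
      funext fun y => hv t y
    rw [hvs, deriv_const_mul_field, hscale1]
    ring
  -- third x-derivative
  have h3 : pxxx v t x = A * c ^ 3 * pxxx u t' x' := by
    unfold pxxx
    have hvs : (fun y => v t y) = fun y => A * (fun y' => u t' (c * y')) y :=
      funext fun y => hv t y
    rw [hvs]
    rw [← iteratedDerivWithin_univ,
      iteratedDerivWithin_const_mul (Set.mem_univ x) uniqueDiffOn_univ A hg.contDiffWithinAt,
      iteratedDerivWithin_univ, hscale3]
    ring
  -- exponential identities
  have hexp1 : A ^ n * c = 1 := by
    rw [hA, hc, ← Real.exp_nat_mul, ← Real.exp_add]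
    norm_num
  have hexp3 : Real.exp t * c ^ 3 = Real.exp t' := by
    rw [hc, ← Real.exp_nat_mul, ← Real.exp_add, ht']
    congr 1
    push_cast
    ring
  have hval : v t x = A * u t' x' := hv t x
  have hp := hpde t' x'
  rw [h1, h2, h3, hval]
  linear_combination A * hp + A * (u t' x') ^ n * px u t' x' * hexp1 +
    ε * A * pxxx u t' x' * hexp3
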